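/- Fix ℓ ∈ ℕ with ℓ ≥ 1 and a ∈ (0, 1/5). For n ∈ ℕ write n = 2ℓm + r with m ∈ ℕ and r ∈ {−1, 0, …, 2ℓ−2}, and define C_n(x) = Σ_{j=0}^{m−1} Σ_{k=0}^{ℓ−1} ((2ℓj+k) sin((2ℓj+k)x) + (2ℓj+ℓ+k) sin((2ℓj+ℓ+k)x))² + Σ_{j=2ℓm}^{n} j² sin²(jx). Let E_n = [0, π/ℓ] \ ([0, n^{−a}] ∪ [π/(2ℓ) − n^{−a}, π/(2ℓ) + n^{−a}] ∪ [π/ℓ − n^{−a}, π/ℓ]). Then there exist C > 0 and N such that for all n ≥ N and all x ∈ E_n, |C_n(x) − (n³/3) cos²(ℓx/2)| ≤ C n^{2+a}. -/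

import Mathlib

open Real Set

section Helpers
open Finset

private lemma sum_block_aux (f : ℕ → ℝ) (L m : ℕ) :
    ∑ j ∈ range m, ∑ k ∈ range (2*L), f (2*L*j + k) = ∑ i ∈ range (2*L*m), f i := by
  induction m with
  | zero => simp
  | succ m ih =>
    rw [Finset.sum_range_succ, ih, show 2*L*(m+1) = 2*L*m + 2*L by ring,
      Finset.sum_range_add]

private lemma sum_block_pair (f : ℕ → ℝ) (L m : ℕ) :
    ∑ j ∈ range m, ∑ k ∈ range L, (f (2*L*j + k) + f (2*L*j + L + k))
      = ∑ i ∈ range (2*L*m), f i := by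
  rw [← sum_block_aux f L m]
  refine Finset.sum_congr rfl fun j _ => ?_
  rw [Finset.sum_add_distrib, show 2*L = L + L by ring, Finset.sum_range_add]
  congr 1
  exact Finset.sum_congr rfl fun k _ => by congr 1; ring

private lemma sum_sq_range (u : ℕ) :
    ∑ i ∈ range u, (i:ℝ)^2 = (u:ℝ)^3/3 - (u:ℝ)^2/2 + (u:ℝ)/6 := by
  induction u with
  | zero => simp
  | succ u ih => rw [Finset.sum_range_succ, ih]; push_cast; ring

private lemma cos_partial_bound (θ φ : ℝ) (hs : Real.sin (θ/2) ≠ 0) (k : ℕ) :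
    |∑ j ∈ range k, Real.cos (j*θ + φ)| ≤ 1 / |Real.sin (θ/2)| := by
  have hpos : 0 < |Real.sin (θ/2)| := abs_pos.mpr hs
  have key : ∀ j : ℕ, 2 * Real.sin (θ/2) * Real.cos (j*θ + φ)
      = (fun j : ℕ => Real.sin ((j:ℝ)*θ + φ - θ/2)) (j+1)
        - (fun j : ℕ => Real.sin ((j:ℝ)*θ + φ - θ/2)) j := by
    intro j
    simp only []
    have h1 : ((j+1 : ℕ):ℝ)*θ + φ - θ/2 = ((j:ℝ)*θ + φ) + θ/2 := by push_cast; ring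
    have h2 : (j:ℝ)*θ + φ - θ/2 = ((j:ℝ)*θ + φ) - θ/2 := by ring
    rw [h1, h2, Real.sin_add, Real.sin_sub]; ring
  have tele : 2 * Real.sin (θ/2) * ∑ j ∈ range k, Real.cos (j*θ + φ)
      = Real.sin ((k:ℝ)*θ + φ - θ/2) - Real.sin ((0:ℝ)*θ + φ - θ/2) := by
    rw [Finset.mul_sum]
    simp_rw [key]
    simpa using Finset.sum_range_sub (fun j : ℕ => Real.sin ((j:ℝ)*θ + φ - θ/2)) k
  have hb : |2 * Real.sin (θ/2) * ∑ j ∈ range k, Real.cos (j*θ + φ)| ≤ 2 := by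
    rw [tele]
    have := Real.neg_one_le_sin ((k:ℝ)*θ + φ - θ/2)
    have := Real.sin_le_one ((k:ℝ)*θ + φ - θ/2)
    have := Real.neg_one_le_sin ((0:ℝ)*θ + φ - θ/2)
    have := Real.sin_le_one ((0:ℝ)*θ + φ - θ/2)
    rw [abs_le]; constructor <;> linarith
  rw [abs_mul, abs_mul, abs_two] at hb
  rw [le_div_iff₀ hpos]
  nlinarith [abs_nonneg (∑ j ∈ range k, Real.cos (j*θ + φ))]

private lemma abel_cos_bound (θ φ : ℝ) (hs : Real.sin (θ/2) ≠ 0) (f : ℕ → ℝ)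
    (hf : Monotone f) (h0 : 0 ≤ f 0) (N : ℕ) :
    |∑ j ∈ range N, f j * Real.cos ((j:ℝ)*θ + φ)| ≤ 2 * f N / |Real.sin (θ/2)| := by
  have hpos : 0 < |Real.sin (θ/2)| := abs_pos.mpr hs
  have hfN : 0 ≤ f N := le_trans h0 (hf (Nat.zero_le N))
  rcases Nat.eq_zero_or_pos N with hN | hN
  · subst hN; simp; positivity
  have hby := Finset.sum_range_by_parts f (fun j => Real.cos ((j:ℝ)*θ + φ)) N
  simp only [smul_eq_mul] at hby
  set G : ℕ → ℝ := fun k => ∑ j ∈ range k, Real.cos ((j:ℝ)*θ + φ) with hG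
  have hGb : ∀ k, |G k| ≤ 1 / |Real.sin (θ/2)| := fun k => cos_partial_bound θ φ hs k
  rw [hby]
  have h1 : |f (N-1) * G N| ≤ f (N-1) * (1 / |Real.sin (θ/2)|) := by
    rw [abs_mul, abs_of_nonneg (le_trans h0 (hf (Nat.zero_le _)))]
    exact mul_le_mul_of_nonneg_left (hGb N) (le_trans h0 (hf (Nat.zero_le _)))
  have h2 : |∑ i ∈ range (N-1), (f (i+1) - f i) * G (i+1)|
      ≤ (f (N-1) - f 0) * (1 / |Real.sin (θ/2)|) := by
    calc |∑ i ∈ range (N-1), (f (i+1) - f i) * G (i+1)|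
        ≤ ∑ i ∈ range (N-1), |(f (i+1) - f i) * G (i+1)| := Finset.abs_sum_le_sum_abs _ _
      _ ≤ ∑ i ∈ range (N-1), (f (i+1) - f i) * (1 / |Real.sin (θ/2)|) := by
          refine Finset.sum_le_sum fun i _ => ?_
          rw [abs_mul, abs_of_nonneg (sub_nonneg.mpr (hf (Nat.le_succ i)))]
          exact mul_le_mul_of_nonneg_left (hGb (i+1))
            (sub_nonneg.mpr (hf (Nat.le_succ i)))
      _ = (f (N-1) - f 0) * (1 / |Real.sin (θ/2)|) := by
          rw [← Finset.sum_mul, Finset.sum_range_sub]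
  have habs : |f (N-1) * G N - ∑ i ∈ range (N-1), (f (i+1) - f i) * G (i+1)|
      ≤ |f (N-1) * G N| + |∑ i ∈ range (N-1), (f (i+1) - f i) * G (i+1)| :=
    abs_sub _ _
  have hmono : f (N-1) ≤ f N := hf (Nat.sub_le N 1)
  have hrw : 2 * f N / |Real.sin (θ/2)| = 2 * f N * (1 / |Real.sin (θ/2)|) := by ring
  rw [hrw]
  have hinv : 0 ≤ 1 / |Real.sin (θ/2)| := by positivity
  nlinarith [h1, h2, habs]

private lemma sin_lb_min {t : ℝ} (h0 : 0 ≤ t) (h1 : t ≤ π) :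
    2/π * min t (π - t) ≤ Real.sin t := by
  rcases le_or_gt t (π/2) with h | h
  · have hmin : min t (π - t) = t := min_eq_left (by linarith)
    rw [hmin]; exact Real.mul_le_sin h0 h
  · have hmin : min t (π - t) = π - t := min_eq_right (by linarith)
    rw [hmin, ← Real.sin_pi_sub]
    exact Real.mul_le_sin (by linarith) (by linarith)

private lemma abs_sin_lb {t d : ℝ} (hd : 0 ≤ d) (h1 : d ≤ t) (h2 : t ≤ 2*π - d)
    (h3 : d ≤ |t - π|) : 2/π * d ≤ |Real.sin t| := by
  have hπ := Real.pi_pos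
  rcases le_or_gt t π with h | h
  · have hs : 0 ≤ Real.sin t := Real.sin_nonneg_of_nonneg_of_le_pi (by linarith) h
    rw [abs_of_nonneg hs]
    have hmin : d ≤ min t (π - t) := by
      rw [abs_of_nonpos (by linarith)] at h3
      exact le_min h1 (by linarith)
    calc 2/π * d ≤ 2/π * min t (π - t) := by
          apply mul_le_mul_of_nonneg_left hmin; positivity
      _ ≤ Real.sin t := sin_lb_min (by linarith) h
  · have heq : |Real.sin t| = Real.sin (t - π) := by
      rw [show Real.sin (t - π) = -Real.sin t from Real.sin_sub_pi t, ← abs_of_nonneg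
        (show (0:ℝ) ≤ -Real.sin t from ?_), abs_neg]
      rw [show -Real.sin t = Real.sin (t - π) from (Real.sin_sub_pi t).symm]
      exact Real.sin_nonneg_of_nonneg_of_le_pi (by linarith) (by linarith)
    rw [heq]
    have hmin : d ≤ min (t - π) (π - (t - π)) := by
      rw [abs_of_nonneg (by linarith)] at h3
      exact le_min h3 (by linarith)
    calc 2/π * d ≤ 2/π * min (t - π) (π - (t - π)) := by
          apply mul_le_mul_of_nonneg_left hmin; positivity
      _ ≤ Real.sin (t - π) := sin_lb_min (by linarith) (by linarith)

private lemma Wbound_aux {L u nn : ℝ} (hL : 1 ≤ L) (hn : 1 ≤ nn) (hun : u ≤ nn+1)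
    (hnu : nn ≤ u + 2*L) (hu0 : 0 ≤ u) (hLn : 2*L+1 ≤ nn) :
    |(u^3/3 - u^2/2 + u/6 - L^2*u/2)/2 - nn^3/6| ≤ 30*(L+1)*nn^2 := by
  have hL0 : (0:ℝ) < L := by linarith
  have hn2 : nn ≤ nn^2 := by nlinarith
  have hn21 : (1:ℝ) ≤ nn^2 := by nlinarith
  have hu2n : u ≤ 2*nn := by linarith
  have hu2 : u^2 ≤ 4*nn^2 := by nlinarith
  have hcube_up : u^3 ≤ nn^3 + 7*nn^2 := by
    have h1 : u^3 ≤ (nn+1)^3 := pow_le_pow_left₀ hu0 hun 3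
    nlinarith [h1]
  have hcube_dn : nn^3 ≤ u^3 + 50*L*nn^2 := by
    rcases le_or_gt nn u with h | h
    · have h1 : nn^3 ≤ u^3 := pow_le_pow_left₀ (by linarith) h 3
      have h2 : (0:ℝ) ≤ L*nn^2 := by positivity
      linarith
    · have hfac : nn^3 - u^3 = (nn-u)*(nn^2 + nn*u + u^2) := by ring
      have h1 : nn - u ≤ 2*L := by linarith
      have h2 : nn^2 + nn*u + u^2 ≤ 7*nn^2 := by nlinarith
      have h3 : (nn-u)*(nn^2 + nn*u + u^2) ≤ (2*L)*(7*nn^2) := by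
        apply mul_le_mul h1 h2 (by nlinarith) (by positivity)
      nlinarith [h3]
  have hl2a : L*u ≤ nn^2 := by nlinarith
  have hl2u : L^2 * u ≤ 2*L*nn^2 := by
    have := mul_le_mul_of_nonneg_left hl2a (le_of_lt hL0)
    nlinarith [this, mul_nonneg (le_of_lt hL0) (sq_nonneg nn)]
  have hl2u0 : (0:ℝ) ≤ L^2 * u := by positivity
  have hu20 : (0:ℝ) ≤ u^2 := sq_nonneg u
  have hln20 : (0:ℝ) ≤ L*nn^2 := by positivity
  rw [abs_le]
  constructor
  · linarith [hcube_dn, hu2, hl2u, hn2, hn21, hln20]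
  · linarith [hcube_up, hu2n, hl2u0, hu20, hn2, hn21, hln20]

private lemma Pbound_aux {nn : ℝ} (hn : 1 ≤ nn) :
    |((nn+1)^3/3 - (nn+1)^2/2 + (nn+1)/6)/2 - nn^3/6| ≤ nn^2 := by
  rw [abs_le]
  constructor <;> nlinarith

private lemma final_aux {L nn ρ : ℝ} (hL : 1 ≤ L) (hn : 1 ≤ nn) (hρ : 1 ≤ ρ)
    (hLn : 2*L+1 ≤ nn) :
    nn^2 + 30*(L+1)*nn^2 + (π*(nn+1)^2*ρ)/2 + L*(π*(nn+1+2*L)^2*ρ)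
      ≤ 500*(L+1)^2*(nn^2*ρ) := by
  have hπ := Real.pi_pos
  have hπ4 := Real.pi_le_four
  have hρ0 : (0:ℝ) < ρ := by linarith
  have h4a : (nn+1)^2 ≤ 4*nn^2 := by nlinarith
  have h4b : (nn+1+2*L)^2 ≤ 4*nn^2 := by nlinarith
  have hA0 : (0:ℝ) ≤ nn^2*ρ := by positivity
  have e1 : π*(nn+1)^2*ρ ≤ 16*(nn^2*ρ) := by
    have t1 : (nn+1)^2 * ρ ≤ 4*nn^2 * ρ := mul_le_mul_of_nonneg_right h4a (le_of_lt hρ0)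
    have t2 : π * ((nn+1)^2 * ρ) ≤ 4 * ((nn+1)^2 * ρ) :=
      mul_le_mul_of_nonneg_right hπ4 (by positivity)
    nlinarith [t1, t2]
  have e2 : L*(π*(nn+1+2*L)^2*ρ) ≤ 16*L*(nn^2*ρ) := by
    have t1 : (nn+1+2*L)^2 * ρ ≤ 4*nn^2 * ρ := mul_le_mul_of_nonneg_right h4b (le_of_lt hρ0)
    have t2 : π * ((nn+1+2*L)^2 * ρ) ≤ 4 * ((nn+1+2*L)^2 * ρ) :=
      mul_le_mul_of_nonneg_right hπ4 (by positivity)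
    have t3 : π*(nn+1+2*L)^2*ρ ≤ 16*(nn^2*ρ) := by nlinarith [t1, t2]
    have := mul_le_mul_of_nonneg_left t3 (by linarith : (0:ℝ) ≤ L)
    nlinarith [this]
  have e3 : 30*(L+1)*nn^2 ≤ 30*(L+1)*(nn^2*ρ) := by
    have t1 : nn^2 ≤ nn^2*ρ := by nlinarith [sq_nonneg nn]
    have := mul_le_mul_of_nonneg_left t1 (by linarith : (0:ℝ) ≤ 30*(L+1))
    linarith [this]
  have hfin : (39:ℝ) + 46*L ≤ 500*(L+1)^2 := by nlinarith
  have hmul := mul_le_mul_of_nonneg_right hfin hA0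
  have hn2ρ : nn^2 ≤ nn^2*ρ := by nlinarith [sq_nonneg nn]
  nlinarith [e1, e2, e3, hmul, hn2ρ,
    mul_nonneg (mul_nonneg (by linarith : (0:ℝ) ≤ L) (sq_nonneg nn)) (le_of_lt hρ0)]

end Helpers

set_option maxHeartbeats 1000000 in
theorem estimate_C_pairwise_blocks
    (ℓ : ℕ) (hℓ : 1 ≤ ℓ) (ν : ℝ) (hν : ν ∈ Set.Ioo (0 : ℝ) (1 / 5)) :
    ∃ C > 0, ∃ N : ℕ, ∀ n ≥ N, ∀ m : ℕ, ∀ r : ℤ,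
      (n : ℤ) = 2 * ℓ * m + r → -1 ≤ r → r ≤ 2 * ℓ - 2 →
      ∀ x ∈ Set.Icc (0 : ℝ) (π / ℓ) \
          (Set.Icc (0 : ℝ) ((n : ℝ) ^ (-ν)) ∪
            Set.Icc (π / (2 * ℓ) - (n : ℝ) ^ (-ν)) (π / (2 * ℓ) + (n : ℝ) ^ (-ν)) ∪
            Set.Icc (π / ℓ - (n : ℝ) ^ (-ν)) (π / ℓ)),
        |(∑ j ∈ Finset.range m, ∑ k ∈ Finset.range ℓ,
              (((2 * ℓ * j + k : ℕ) : ℝ) * Real.sin (((2 * ℓ * j + k : ℕ) : ℝ) * x) +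
                ((2 * ℓ * j + ℓ + k : ℕ) : ℝ) *
                  Real.sin (((2 * ℓ * j + ℓ + k : ℕ) : ℝ) * x)) ^ 2 +
            ∑ j ∈ Finset.Icc (2 * ℓ * m) n, (j : ℝ) ^ 2 * Real.sin ((j : ℝ) * x) ^ 2) -
          (n : ℝ) ^ 3 / 3 * Real.cos (ℓ * x / 2) ^ 2|
        ≤ C * (n : ℝ) ^ (2 + ν) := by
  classical
  obtain ⟨hν0, hν5⟩ := hν
  refine ⟨500*((ℓ:ℝ)+1)^2, by positivity, 8*ℓ+8, ?_⟩
  intro n hn m r hnr hr1 hr2 x hx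
  have hℓR : (1:ℝ) ≤ (ℓ:ℝ) := by exact_mod_cast hℓ
  have hℓpos : (0:ℝ) < (ℓ:ℝ) := by linarith
  have hn1 : 1 ≤ n := by omega
  have hnR : (1:ℝ) ≤ (n:ℝ) := by exact_mod_cast hn1
  have hnpos : (0:ℝ) < (n:ℝ) := by linarith
  have hπ := Real.pi_pos
  have hπ4 := Real.pi_le_four
  set ε := (n:ℝ)^(-ν) with hεdef
  set ρ := (n:ℝ)^ν with hρdef
  have hρ1 : (1:ℝ) ≤ ρ := Real.one_le_rpow hnR (le_of_lt hν0)
  have hρpos : (0:ℝ) < ρ := by linarith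
  have hερ : ε = ρ⁻¹ := by rw [hεdef, hρdef, Real.rpow_neg (le_of_lt hnpos)]
  have hεpos : 0 < ε := by rw [hερ]; positivity
  have hε1 : ε ≤ 1 := by rw [hερ]; exact inv_le_one_of_one_le₀ hρ1
  -- unpack x
  obtain ⟨⟨hx0, hxle⟩, hxnot⟩ := hx
  have hxA : ε < x := by
    by_contra h; push_neg at h
    exact hxnot (Or.inl (Or.inl ⟨hx0, h⟩))
  have hxC : x < π/ℓ - ε := by
    by_contra h; push_neg at h
    exact hxnot (Or.inr ⟨h, hxle⟩)
  have hxB : x < π/(2*ℓ) - ε ∨ π/(2*ℓ) + ε < x := by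
    rcases lt_or_ge x (π/(2*ℓ) - ε) with h | h
    · exact Or.inl h
    · right
      by_contra h2; push_neg at h2
      exact hxnot (Or.inl (Or.inr ⟨h, h2⟩))
  have hππ : π/ℓ ≤ π := by
    rw [div_le_iff₀ hℓpos]; nlinarith
  have hxpos : 0 < x := lt_trans hεpos hxA
  have hxπ : x < π - ε := by
    have : π/ℓ - ε ≤ π - ε := by linarith
    linarith
  -- sin x lower bound
  have hsinx : 2/π * ε ≤ Real.sin x := by
    have hmin : ε ≤ min x (π - x) := le_min (le_of_lt hxA) (by linarith)
    calc 2/π * ε ≤ 2/π * min x (π - x) := by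
          apply mul_le_mul_of_nonneg_left hmin; positivity
      _ ≤ Real.sin x := sin_lb_min (le_of_lt hxpos) (by linarith)
  have hsinxpos : 0 < Real.sin x := lt_of_lt_of_le (by positivity) hsinx
  have hsinxne : Real.sin x ≠ 0 := ne_of_gt hsinxpos
  -- sin 2ℓx lower bound
  have h2ℓpos : (0:ℝ) < 2*(ℓ:ℝ) := by positivity
  have hsplit1 : (2:ℝ)*(ℓ:ℝ) * (π/(2*ℓ) - ε) = π - 2*ℓ*ε := by
    field_simp
  have hsplit2 : (2:ℝ)*(ℓ:ℝ) * (π/(2*ℓ) + ε) = π + 2*ℓ*ε := by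
    field_simp
  have h2ε : 2*ε ≤ 2*(ℓ:ℝ)*ε := by
    nlinarith [mul_nonneg (sub_nonneg.mpr hℓR) (le_of_lt hεpos)]
  have habsmid : 2*ε ≤ |2*(ℓ:ℝ)*x - π| := by
    rcases hxB with h | h
    · have h' : 2*(ℓ:ℝ)*x < π - 2*ℓ*ε := by
        have := mul_lt_mul_of_pos_left h h2ℓpos
        rw [hsplit1] at this; linarith
      rw [abs_sub_comm, abs_of_nonneg (by linarith)]
      linarith
    · have h' : π + 2*ℓ*ε < 2*(ℓ:ℝ)*x := by
        have := mul_lt_mul_of_pos_left h h2ℓpos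
        rw [hsplit2] at this; linarith
      rw [abs_of_nonneg (by linarith)]
      linarith
  have hsin2 : 2/π * ε ≤ |Real.sin (2*(ℓ:ℝ)*x)| := by
    have hup : 2*(ℓ:ℝ)*x ≤ 2*π - 2*ε := by
      have h2 : (2:ℝ)*ℓ*x ≤ 2*ℓ*(π/ℓ - ε) := by nlinarith [le_of_lt hxC]
      have h3 : (2:ℝ)*ℓ*(π/ℓ - ε) = 2*π - 2*ℓ*ε := by field_simp
      nlinarith
    have hlow : 2*ε ≤ 2*(ℓ:ℝ)*x := by nlinarith
    have := abs_sin_lb (by positivity : (0:ℝ) ≤ 2*ε) hlow hup habsmid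
    nlinarith [this, mul_pos (show (0:ℝ) < 2/π by positivity) hεpos]
  have hsin2ne : Real.sin (2*(ℓ:ℝ)*x) ≠ 0 := by
    intro h; rw [h, abs_zero] at hsin2
    nlinarith [hsin2, mul_pos (show (0:ℝ) < 2/π by positivity) hεpos]
  -- inverse bounds
  have hainv : ∀ s : ℝ, 2/π * ε ≤ |s| → 1/|s| ≤ π/2 * ρ := by
    intro s hs
    have hspos : 0 < |s| := lt_of_lt_of_le (by positivity) hs
    rw [div_le_iff₀ hspos]
    have hone : (π/2*ρ) * (2/π*ε) = ρ * ε := by field_simp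
    have hρε : ρ * ε = 1 := by rw [hερ]; exact mul_inv_cancel₀ (ne_of_gt hρpos)
    nlinarith [mul_le_mul_of_nonneg_left hs (le_of_lt (show (0:ℝ) < π/2*ρ by positivity))]
  have hinvx : 1/|Real.sin x| ≤ π/2 * ρ := hainv _ (by rwa [abs_of_pos hsinxpos])
  have hinv2 : 1/|Real.sin (2*(ℓ:ℝ)*x)| ≤ π/2 * ρ := hainv _ hsin2
  -- integer facts
  have hucast : ((2*ℓ*m : ℕ) : ℤ) = 2*(ℓ:ℤ)*(m:ℤ) := by push_cast; ring
  have humℕ : 2*ℓ*m ≤ n + 1 := by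
    have h1 : ((2*ℓ*m : ℕ) : ℤ) ≤ (n:ℤ) + 1 := by rw [hucast]; linarith [hnr, hr1]
    exact_mod_cast h1
  have huR1 : ((2*ℓ*m : ℕ) : ℝ) ≤ (n:ℝ) + 1 := by exact_mod_cast humℕ
  have hnuR : (n:ℝ) ≤ ((2*ℓ*m : ℕ) : ℝ) + 2*(ℓ:ℝ) := by
    have h1 : (n:ℤ) ≤ ((2*ℓ*m : ℕ) : ℤ) + 2*(ℓ:ℤ) := by rw [hucast]; linarith [hnr, hr2]
    exact_mod_cast h1
  have hℓn : 2*(ℓ:ℝ) + 1 ≤ (n:ℝ) := by exact_mod_cast (show 2*ℓ+1 ≤ n by omega)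
  have hu0 : (0:ℝ) ≤ ((2*ℓ*m : ℕ) : ℝ) := Nat.cast_nonneg _
  -- abbreviations
  obtain ⟨W, hWdef⟩ : ∃ w : ℝ, w = ∑ j ∈ Finset.range m, ∑ k ∈ Finset.range ℓ,
      (((2*ℓ*j+k : ℕ):ℝ) * ((2*ℓ*j+ℓ+k : ℕ):ℝ)) := ⟨_, rfl⟩
  obtain ⟨Y, hYdef⟩ : ∃ y : ℝ, y = ∑ j ∈ Finset.range m, ∑ k ∈ Finset.range ℓ,
      (((2*ℓ*j+k : ℕ):ℝ) * ((2*ℓ*j+ℓ+k : ℕ):ℝ)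
        * Real.cos ((j:ℝ)*(4*(ℓ:ℝ)*x) + (2*(k:ℝ)+(ℓ:ℝ))*x)) := ⟨_, rfl⟩
  obtain ⟨P, hPdef⟩ : ∃ p : ℝ, p = ∑ i ∈ Finset.range (n+1), (i:ℝ)^2 := ⟨_, rfl⟩
  obtain ⟨Q, hQdef⟩ : ∃ q : ℝ, q = ∑ i ∈ Finset.range (n+1),
      ((i:ℝ)^2 * Real.cos ((i:ℝ)*(2*x) + 0)) := ⟨_, rfl⟩
  -- the tail sum
  have hIcc : ∑ j ∈ Finset.Icc (2*ℓ*m) n, (j:ℝ)^2 * Real.sin ((j:ℝ)*x)^2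
      = ∑ i ∈ Finset.range (n+1), (i:ℝ)^2 * Real.sin ((i:ℝ)*x)^2
        - ∑ i ∈ Finset.range (2*ℓ*m), (i:ℝ)^2 * Real.sin ((i:ℝ)*x)^2 := by
    rw [← Finset.Ico_add_one_right_eq_Icc, eq_sub_iff_add_eq', Finset.range_eq_Ico, Finset.range_eq_Ico]
    exact Finset.sum_Ico_consecutive (fun i : ℕ => (i:ℝ)^2 * Real.sin ((i:ℝ)*x)^2) (Nat.zero_le _) humℕ
  -- the double sum
  have hterm : ∀ j k : ℕ,
      (((2*ℓ*j+k : ℕ):ℝ) * Real.sin (((2*ℓ*j+k : ℕ):ℝ)*x)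
        + ((2*ℓ*j+ℓ+k : ℕ):ℝ) * Real.sin (((2*ℓ*j+ℓ+k : ℕ):ℝ)*x))^2
      = (((2*ℓ*j+k : ℕ):ℝ)^2 * Real.sin (((2*ℓ*j+k : ℕ):ℝ)*x)^2
          + ((2*ℓ*j+ℓ+k : ℕ):ℝ)^2 * Real.sin (((2*ℓ*j+ℓ+k : ℕ):ℝ)*x)^2)
        + (((2*ℓ*j+k : ℕ):ℝ) * ((2*ℓ*j+ℓ+k : ℕ):ℝ) * Real.cos ((ℓ:ℝ)*x)
          - ((2*ℓ*j+k : ℕ):ℝ) * ((2*ℓ*j+ℓ+k : ℕ):ℝ)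
            * Real.cos ((j:ℝ)*(4*(ℓ:ℝ)*x) + (2*(k:ℝ)+(ℓ:ℝ))*x)) := by
    intro j k
    set a : ℝ := ((2*ℓ*j+k : ℕ):ℝ) with ha
    set b : ℝ := ((2*ℓ*j+ℓ+k : ℕ):ℝ) with hb
    have hprod : Real.cos ((ℓ:ℝ)*x) - Real.cos ((a+b)*x)
        = 2 * Real.sin (a*x) * Real.sin (b*x) := by
      have h := Real.cos_sub_cos ((b-a)*x) ((a+b)*x)
      have e1 : ((b-a)*x + (a+b)*x)/2 = b*x := by ring
      have e2 : ((b-a)*x - (a+b)*x)/2 = -(a*x) := by ring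
      rw [e1, e2, Real.sin_neg] at h
      have hba : (b-a)*x = (ℓ:ℝ)*x := by rw [ha, hb]; push_cast; ring
      rw [hba] at h
      linear_combination h
    have hargeq : (a+b)*x = (j:ℝ)*(4*(ℓ:ℝ)*x) + (2*(k:ℝ)+(ℓ:ℝ))*x := by
      rw [ha, hb]; push_cast; ring
    rw [← hargeq]
    linear_combination (-(a*b)) * hprod
  have hdouble : ∑ j ∈ Finset.range m, ∑ k ∈ Finset.range ℓ,
      (((2*ℓ*j+k : ℕ):ℝ) * Real.sin (((2*ℓ*j+k : ℕ):ℝ)*x)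
        + ((2*ℓ*j+ℓ+k : ℕ):ℝ) * Real.sin (((2*ℓ*j+ℓ+k : ℕ):ℝ)*x))^2
      = ∑ i ∈ Finset.range (2*ℓ*m), (i:ℝ)^2 * Real.sin ((i:ℝ)*x)^2
        + (Real.cos ((ℓ:ℝ)*x) * W - Y) := by
    have step1 : ∑ j ∈ Finset.range m, ∑ k ∈ Finset.range ℓ,
        (((2*ℓ*j+k : ℕ):ℝ) * Real.sin (((2*ℓ*j+k : ℕ):ℝ)*x)
          + ((2*ℓ*j+ℓ+k : ℕ):ℝ) * Real.sin (((2*ℓ*j+ℓ+k : ℕ):ℝ)*x))^2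
        = ∑ j ∈ Finset.range m, ∑ k ∈ Finset.range ℓ,
          ((((2*ℓ*j+k : ℕ):ℝ)^2 * Real.sin (((2*ℓ*j+k : ℕ):ℝ)*x)^2
            + ((2*ℓ*j+ℓ+k : ℕ):ℝ)^2 * Real.sin (((2*ℓ*j+ℓ+k : ℕ):ℝ)*x)^2)
          + (((2*ℓ*j+k : ℕ):ℝ) * ((2*ℓ*j+ℓ+k : ℕ):ℝ) * Real.cos ((ℓ:ℝ)*x)
            - ((2*ℓ*j+k : ℕ):ℝ) * ((2*ℓ*j+ℓ+k : ℕ):ℝ)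
              * Real.cos ((j:ℝ)*(4*(ℓ:ℝ)*x) + (2*(k:ℝ)+(ℓ:ℝ))*x))) :=
      Finset.sum_congr rfl fun j _ => Finset.sum_congr rfl fun k _ => hterm j k
    rw [step1]
    simp only [Finset.sum_add_distrib, Finset.sum_sub_distrib]
    have hpairs := sum_block_pair (fun i => (i:ℝ)^2 * Real.sin ((i:ℝ)*x)^2) ℓ m
    simp only [Finset.sum_add_distrib] at hpairs
    have hcross1 : ∑ j ∈ Finset.range m, ∑ k ∈ Finset.range ℓ,
        (((2*ℓ*j+k : ℕ):ℝ) * ((2*ℓ*j+ℓ+k : ℕ):ℝ) * Real.cos ((ℓ:ℝ)*x))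
        = Real.cos ((ℓ:ℝ)*x) * W := by
      rw [hWdef, Finset.mul_sum]
      refine Finset.sum_congr rfl fun j _ => ?_
      rw [Finset.mul_sum]
      exact Finset.sum_congr rfl fun k _ => by ring
    linear_combination hpairs + hcross1 + hYdef
  -- the full square sum
  have hQsplit : ∑ i ∈ Finset.range (n+1), (i:ℝ)^2 * Real.sin ((i:ℝ)*x)^2
      = P/2 - Q/2 := by
    rw [hPdef, hQdef, Finset.sum_div, Finset.sum_div, ← Finset.sum_sub_distrib]
    refine Finset.sum_congr rfl fun i _ => ?_
    have hs := Real.sin_sq_add_cos_sq ((i:ℝ)*x)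
    have hc := Real.cos_sq ((i:ℝ)*x)
    rw [show 2*((i:ℝ)*x) = (i:ℝ)*(2*x) + 0 by ring] at hc
    linear_combination (i:ℝ)^2 * hs - (i:ℝ)^2 * hc
  -- value of W
  have h2W : 2*W = (∑ i ∈ Finset.range (2*ℓ*m), (i:ℝ)^2) - (ℓ:ℝ)^3 * m := by
    have hpt : ∀ j k : ℕ, 2 * (((2*ℓ*j+k : ℕ):ℝ) * ((2*ℓ*j+ℓ+k : ℕ):ℝ))
        = ((((2*ℓ*j+k : ℕ):ℝ)^2 + ((2*ℓ*j+ℓ+k : ℕ):ℝ)^2)) - (ℓ:ℝ)^2 := by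
      intro j k; push_cast; ring
    have e1 : 2*W = ∑ j ∈ Finset.range m, ∑ k ∈ Finset.range ℓ,
        (((((2*ℓ*j+k : ℕ):ℝ)^2 + ((2*ℓ*j+ℓ+k : ℕ):ℝ)^2)) - (ℓ:ℝ)^2) := by
      rw [hWdef, Finset.mul_sum]
      refine Finset.sum_congr rfl fun j _ => ?_
      rw [Finset.mul_sum]
      exact Finset.sum_congr rfl fun k _ => hpt j k
    rw [e1]
    simp only [Finset.sum_sub_distrib]
    congr 1
    · exact sum_block_pair (fun i => (i:ℝ)^2) ℓ m
    · simp only [Finset.sum_const, Finset.card_range, nsmul_eq_mul]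
      push_cast; ring
  have hTval : (∑ i ∈ Finset.range (2*ℓ*m), (i:ℝ)^2)
      = ((2*ℓ*m : ℕ):ℝ)^3/3 - ((2*ℓ*m : ℕ):ℝ)^2/2 + ((2*ℓ*m : ℕ):ℝ)/6 :=
    sum_sq_range (2*ℓ*m)
  have humR : ((2*ℓ*m : ℕ):ℝ) = 2*(ℓ:ℝ)*(m:ℝ) := by push_cast; ring
  have hWval : W = (((2*ℓ*m : ℕ):ℝ)^3/3 - ((2*ℓ*m : ℕ):ℝ)^2/2 + ((2*ℓ*m : ℕ):ℝ)/6
      - (ℓ:ℝ)^2*((2*ℓ*m : ℕ):ℝ)/2)/2 := by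
    have hm : (ℓ:ℝ)^3*(m:ℝ) = (ℓ:ℝ)^2*((2*ℓ*m : ℕ):ℝ)/2 := by rw [humR]; ring
    rw [hTval, hm] at h2W
    linear_combination h2W/2
  -- main term identity
  have hM : (n:ℝ)^3/3 * Real.cos ((ℓ:ℝ)*x/2)^2
      = (n:ℝ)^3/6 + (n:ℝ)^3/6 * Real.cos ((ℓ:ℝ)*x) := by
    have hc := Real.cos_sq ((ℓ:ℝ)*x/2)
    rw [show 2*((ℓ:ℝ)*x/2) = (ℓ:ℝ)*x by ring] at hc
    linear_combination (n:ℝ)^3/3 * hc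
  -- assemble
  rw [hdouble, hIcc, hQsplit, hM]
  have hkey : ∑ i ∈ Finset.range (2*ℓ*m), (i:ℝ)^2 * Real.sin ((i:ℝ)*x)^2
        + (Real.cos ((ℓ:ℝ)*x) * W - Y)
        + (P/2 - Q/2 - ∑ i ∈ Finset.range (2*ℓ*m), (i:ℝ)^2 * Real.sin ((i:ℝ)*x)^2)
        - ((n:ℝ)^3/6 + (n:ℝ)^3/6 * Real.cos ((ℓ:ℝ)*x))
      = (P/2 - (n:ℝ)^3/6) + Real.cos ((ℓ:ℝ)*x) * (W - (n:ℝ)^3/6) - Q/2 - Y := by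
    ring
  rw [hkey]
  clear hterm hdouble hIcc hQsplit h2W hTval hkey hM hxnot
  -- bound on |W - n³/6|
  have hWbound : |W - (n:ℝ)^3/6| ≤ 30*((ℓ:ℝ)+1)*(n:ℝ)^2 := by
    rw [hWval]
    exact Wbound_aux hℓR hnR huR1 hnuR hu0 hℓn
  -- bound on |P/2 - n³/6|
  have hPbound : |P/2 - (n:ℝ)^3/6| ≤ (n:ℝ)^2 := by
    have hPval : P = ((n:ℝ)+1)^3/3 - ((n:ℝ)+1)^2/2 + ((n:ℝ)+1)/6 := by
      rw [hPdef, sum_sq_range (n+1)]; push_cast; ring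
    rw [hPval, show (((n:ℝ)+1)^3/3 - ((n:ℝ)+1)^2/2 + ((n:ℝ)+1)/6)/2
      = (((n:ℝ)+1)^3/3 - ((n:ℝ)+1)^2/2 + ((n:ℝ)+1)/6)/2 from rfl]
    exact Pbound_aux hnR
  -- bound on |Q|
  have hQbound : |Q| ≤ π * ((n:ℝ)+1)^2 * ρ := by
    have hs2 : Real.sin ((2*x)/2) ≠ 0 := by
      rw [show (2*x)/2 = x by ring]; exact hsinxne
    have hmono : Monotone (fun j : ℕ => (j:ℝ)^2) := by
      intro a b hab
      simpa using pow_le_pow_left₀ (by positivity) (by exact_mod_cast hab : (a:ℝ) ≤ b) 2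
    have h := abel_cos_bound (2*x) 0 hs2 (fun j : ℕ => (j:ℝ)^2) hmono (by norm_num) (n+1)
    rw [show (2*x)/2 = x by ring] at h
    rw [hQdef]
    calc |∑ i ∈ Finset.range (n+1), ((i:ℝ)^2 * Real.cos ((i:ℝ)*(2*x) + 0))|
        ≤ 2*(((n+1 : ℕ)):ℝ)^2 / |Real.sin x| := h
      _ = 2*((n:ℝ)+1)^2 * (1/|Real.sin x|) := by push_cast; ring
      _ ≤ 2*((n:ℝ)+1)^2 * (π/2*ρ) := by
          apply mul_le_mul_of_nonneg_left hinvx (by positivity)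
      _ = π * ((n:ℝ)+1)^2 * ρ := by ring
  -- bound on |Y|
  have hYbound : |Y| ≤ (ℓ:ℝ) * (π * ((n:ℝ)+1+2*(ℓ:ℝ))^2 * ρ) := by
    rw [hYdef, Finset.sum_comm]
    have hinner : ∀ k ∈ Finset.range ℓ,
        |∑ j ∈ Finset.range m, (((2*ℓ*j+k : ℕ):ℝ) * ((2*ℓ*j+ℓ+k : ℕ):ℝ)
          * Real.cos ((j:ℝ)*(4*(ℓ:ℝ)*x) + (2*(k:ℝ)+(ℓ:ℝ))*x))|
        ≤ π * ((n:ℝ)+1+2*(ℓ:ℝ))^2 * ρ := by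
      intro k hk
      have hkℓ : k < ℓ := Finset.mem_range.mp hk
      have hs4 : Real.sin ((4*(ℓ:ℝ)*x)/2) ≠ 0 := by
        rw [show (4*(ℓ:ℝ)*x)/2 = 2*(ℓ:ℝ)*x by ring]; exact hsin2ne
      set fk : ℕ → ℝ := fun j => ((2*ℓ*j+k : ℕ):ℝ) * ((2*ℓ*j+ℓ+k : ℕ):ℝ) with hfk
      have hmono : Monotone fk := by
        intro a b hab
        have h1 : (2*ℓ*a+k : ℕ) ≤ (2*ℓ*b+k : ℕ) := by
          have := Nat.mul_le_mul_left (2*ℓ) hab; omega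
        have h2 : (2*ℓ*a+ℓ+k : ℕ) ≤ (2*ℓ*b+ℓ+k : ℕ) := by
          have := Nat.mul_le_mul_left (2*ℓ) hab; omega
        apply mul_le_mul (by exact_mod_cast h1) (by exact_mod_cast h2)
          (Nat.cast_nonneg _) (Nat.cast_nonneg _)
      have h := abel_cos_bound (4*(ℓ:ℝ)*x) ((2*(k:ℝ)+(ℓ:ℝ))*x) hs4 fk hmono
        (by positivity) m
      rw [show (4*(ℓ:ℝ)*x)/2 = 2*(ℓ:ℝ)*x by ring] at h
      have hkR : (k:ℝ) ≤ (ℓ:ℝ) := by exact_mod_cast le_of_lt hkℓ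
      have hfkm : fk m ≤ ((n:ℝ)+1+2*(ℓ:ℝ))^2 := by
        have h1 : ((2*ℓ*m+k : ℕ):ℝ) ≤ (n:ℝ)+1+2*(ℓ:ℝ) := by
          push_cast
          linarith [huR1, humR.le, humR.ge, hkR]
        have h2 : ((2*ℓ*m+ℓ+k : ℕ):ℝ) ≤ (n:ℝ)+1+2*(ℓ:ℝ) := by
          push_cast
          linarith [huR1, humR.le, humR.ge, hkR]
        calc fk m = ((2*ℓ*m+k : ℕ):ℝ) * ((2*ℓ*m+ℓ+k : ℕ):ℝ) := rfl
          _ ≤ ((n:ℝ)+1+2*(ℓ:ℝ)) * ((n:ℝ)+1+2*(ℓ:ℝ)) := by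
              apply mul_le_mul h1 h2 (Nat.cast_nonneg _) (by linarith [hnR, hℓR])
          _ = ((n:ℝ)+1+2*(ℓ:ℝ))^2 := by ring
      have hfkm0 : 0 ≤ fk m := by positivity
      calc |∑ j ∈ Finset.range m, (((2*ℓ*j+k : ℕ):ℝ) * ((2*ℓ*j+ℓ+k : ℕ):ℝ)
            * Real.cos ((j:ℝ)*(4*(ℓ:ℝ)*x) + (2*(k:ℝ)+(ℓ:ℝ))*x))|
          ≤ 2 * fk m / |Real.sin (2*(ℓ:ℝ)*x)| := by
            have e : ∀ j : ℕ, ((2*ℓ*j+k : ℕ):ℝ) * ((2*ℓ*j+ℓ+k : ℕ):ℝ)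
                * Real.cos ((j:ℝ)*(4*(ℓ:ℝ)*x) + (2*(k:ℝ)+(ℓ:ℝ))*x)
                = fk j * Real.cos ((j:ℝ)*(4*(ℓ:ℝ)*x) + (2*(k:ℝ)+(ℓ:ℝ))*x) := fun j => rfl
            simp only [e]
            exact h
        _ = 2 * fk m * (1/|Real.sin (2*(ℓ:ℝ)*x)|) := by ring
        _ ≤ 2 * ((n:ℝ)+1+2*(ℓ:ℝ))^2 * (π/2*ρ) := by
            apply mul_le_mul (by linarith [hfkm]) hinv2 (by positivity) (by positivity)
        _ = π * ((n:ℝ)+1+2*(ℓ:ℝ))^2 * ρ := by ring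
    calc |∑ k ∈ Finset.range ℓ, ∑ j ∈ Finset.range m,
          (((2*ℓ*j+k : ℕ):ℝ) * ((2*ℓ*j+ℓ+k : ℕ):ℝ)
            * Real.cos ((j:ℝ)*(4*(ℓ:ℝ)*x) + (2*(k:ℝ)+(ℓ:ℝ))*x))|
        ≤ ∑ k ∈ Finset.range ℓ, |∑ j ∈ Finset.range m,
            (((2*ℓ*j+k : ℕ):ℝ) * ((2*ℓ*j+ℓ+k : ℕ):ℝ)
              * Real.cos ((j:ℝ)*(4*(ℓ:ℝ)*x) + (2*(k:ℝ)+(ℓ:ℝ))*x))| :=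
          Finset.abs_sum_le_sum_abs _ _
      _ ≤ ∑ _k ∈ Finset.range ℓ, (π * ((n:ℝ)+1+2*(ℓ:ℝ))^2 * ρ) :=
          Finset.sum_le_sum hinner
      _ = (ℓ:ℝ) * (π * ((n:ℝ)+1+2*(ℓ:ℝ))^2 * ρ) := by
          rw [Finset.sum_const, Finset.card_range, nsmul_eq_mul]
  have habs1 : |(P/2 - (n:ℝ)^3/6) + Real.cos ((ℓ:ℝ)*x) * (W - (n:ℝ)^3/6) - Q/2 - Y|
      ≤ |P/2 - (n:ℝ)^3/6| + |W - (n:ℝ)^3/6| + |Q|/2 + |Y| := by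
    have hc1 : |Real.cos ((ℓ:ℝ)*x) * (W - (n:ℝ)^3/6)| ≤ |W - (n:ℝ)^3/6| := by
      rw [abs_mul]
      exact mul_le_of_le_one_left (abs_nonneg _) (Real.abs_cos_le_one _)
    have t1 := abs_sub ((P/2 - (n:ℝ)^3/6) + Real.cos ((ℓ:ℝ)*x) * (W - (n:ℝ)^3/6) - Q/2) Y
    have t2 := abs_sub ((P/2 - (n:ℝ)^3/6) + Real.cos ((ℓ:ℝ)*x) * (W - (n:ℝ)^3/6)) (Q/2)
    have t3 := abs_add_le (P/2 - (n:ℝ)^3/6) (Real.cos ((ℓ:ℝ)*x) * (W - (n:ℝ)^3/6))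
    have t4 : |Q/2| = |Q|/2 := by rw [abs_div]; norm_num
    linarith [t1, t2, t3, hc1]
  -- final numeric bound
  have hpow : (n:ℝ)^((2:ℝ)+ν) = (n:ℝ)^2 * ρ := by
    rw [Real.rpow_add hnpos, hρdef]
    congr 1
    rw [show (2:ℝ) = ((2:ℕ):ℝ) by norm_num, Real.rpow_natCast]
  rw [hpow]
  calc |(P/2 - (n:ℝ)^3/6) + Real.cos ((ℓ:ℝ)*x) * (W - (n:ℝ)^3/6) - Q/2 - Y|
      ≤ |P/2 - (n:ℝ)^3/6| + |W - (n:ℝ)^3/6| + |Q|/2 + |Y| := habs1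
    _ ≤ (n:ℝ)^2 + 30*((ℓ:ℝ)+1)*(n:ℝ)^2 + (π * ((n:ℝ)+1)^2 * ρ)/2
        + (ℓ:ℝ) * (π * ((n:ℝ)+1+2*(ℓ:ℝ))^2 * ρ) := by
        have hQ2 : |Q|/2 ≤ (π * ((n:ℝ)+1)^2 * ρ)/2 := by linarith [hQbound]
        exact add_le_add (add_le_add (add_le_add hPbound hWbound) hQ2) hYbound
    _ ≤ 500*((ℓ:ℝ)+1)^2 * ((n:ℝ)^2 * ρ) := by
        exact final_aux hℓR hnR hρ1 hℓn
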